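/- Let A = (A0, A1, d, ·) be a strict pre-Lie 2-algebra and let ((ρ0,ρ1),(μ0,μ1)) be a strict representation of A on a two-term complex ∂ : V1 → V0. Define a multiplication ∗ on the graded space (A0 ⊕ V0, A1 ⊕ V1) with differential d + ∂ by (x+u)∗(y+v) = x·y + ρ0(x)v + μ0(y)u, (x+u)∗(a+m) = x·a + ρ0(x)m + μ1(a)u, (a+m)∗(y+v) = a·y + ρ1(a)v + μ0(y)m, for x,y ∈ A0, a ∈ A1, u,v ∈ V0, m ∈ V1. Then (A0 ⊕ V0, A1 ⊕ V1, d + ∂, ∗) is a strict pre-Lie 2-algebra (the semidirect product). -/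
import Mathlib


namespace PreLie2

open Module TensorProduct

variable (K : Type*) [Field K]

/-- A two-argument map between modules is bilinear. -/
def IsBilin {M N P : Type*} [AddCommGroup M] [Module K M] [AddCommGroup N] [Module K N]
    [AddCommGroup P] [Module K P] (f : M → N → P) : Prop :=
  (∀ m, IsLinearMap K (f m)) ∧ ∀ n, IsLinearMap K fun m => f m n

section TwoTerm

variable {A0 A1 : Type*} [AddCommGroup A0] [Module K A0] [AddCommGroup A1] [Module K A1]

/-- A strict pre-Lie `2`-algebra structure on the two-term complex `d : A1 → A0`. -/
structure IsStrictPreLie2 (d : A1 → A0) (m00 : A0 → A0 → A0)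
    (m01 : A0 → A1 → A1) (m10 : A1 → A0 → A1) : Prop where
  d_lin : IsLinearMap K d
  m00_bilin : IsBilin K m00
  m01_bilin : IsBilin K m01
  m10_bilin : IsBilin K m10
  d_m01 : ∀ x a, d (m01 x a) = m00 x (d a)
  d_m10 : ∀ a x, d (m10 a x) = m00 (d a) x
  d_mix : ∀ a b, m01 (d a) b = m10 a (d b)
  preLie0 : ∀ x y z, m00 x (m00 y z) - m00 (m00 x y) z = m00 y (m00 x z) - m00 (m00 y x) z
  preLie1 : ∀ x y a, m01 x (m01 y a) - m01 (m00 x y) a = m01 y (m01 x a) - m01 (m00 y x) a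
  preLie2 : ∀ a x y, m10 a (m00 x y) - m10 (m10 a x) y = m01 x (m10 a y) - m10 (m01 x a) y

/-- A strict Lie `2`-algebra structure on the two-term complex `δ : A1 → A0`. -/
structure IsStrictLie2 (δ : A1 → A0) (br0 : A0 → A0 → A0) (br1 : A0 → A1 → A1) : Prop where
  δ_lin : IsLinearMap K δ
  br0_bilin : IsBilin K br0
  br1_bilin : IsBilin K br1
  skew : ∀ x y, br0 x y = -br0 y x
  δ_br1 : ∀ x a, δ (br1 x a) = br0 x (δ a)
  br1_δ : ∀ a b, br1 (δ a) b = -br1 (δ b) a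
  jacobi0 : ∀ x y z, br0 (br0 x y) z + br0 (br0 y z) x + br0 (br0 z x) y = 0
  jacobi1 : ∀ x y b, br1 x (br1 y b) - br1 y (br1 x b) - br1 (br0 x y) b = 0

/-- A strict associative `2`-algebra structure on the two-term complex `d : A1 → A0`. -/
structure IsStrictAssoc2 (d : A1 → A0) (m00 : A0 → A0 → A0)
    (m01 : A0 → A1 → A1) (m10 : A1 → A0 → A1) : Prop where
  d_lin : IsLinearMap K d
  m00_bilin : IsBilin K m00
  m01_bilin : IsBilin K m01
  m10_bilin : IsBilin K m10
  d_m01 : ∀ x a, d (m01 x a) = m00 x (d a)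
  d_m10 : ∀ a x, d (m10 a x) = m00 (d a) x
  d_mix : ∀ a b, m01 (d a) b = m10 a (d b)
  assoc000 : ∀ x y z, m00 x (m00 y z) = m00 (m00 x y) z
  assoc001 : ∀ x y a, m01 x (m01 y a) = m01 (m00 x y) a
  assoc010 : ∀ x a y, m01 x (m10 a y) = m10 (m01 x a) y
  assoc100 : ∀ a x y, m10 a (m00 x y) = m10 (m10 a x) y

end TwoTerm

/-- A pre-Lie algebra structure. -/
structure IsPreLie {B : Type*} [AddCommGroup B] [Module K B] (mul : B → B → B) : Prop where
  bilin : IsBilin K mul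
  preLie : ∀ x y z, mul (mul x y) z - mul x (mul y z) = mul (mul y x) z - mul y (mul x z)

section Rep

variable {g0 g1 V0 V1 : Type*}
  [AddCommGroup g0] [Module K g0] [AddCommGroup g1] [Module K g1]
  [AddCommGroup V0] [Module K V0] [AddCommGroup V1] [Module K V1]

/-- A strict representation of a strict Lie 2-algebra `(g0, g1, δ, br0, br1)` on the
two-term complex `par : V1 → V0`. -/
structure IsStrictRepLie2 (δ : g1 → g0) (br0 : g0 → g0 → g0) (br1 : g0 → g1 → g1)
    (par : V1 → V0) (ρ00 : g0 → V0 → V0) (ρ01 : g0 → V1 → V1) (ρ1 : g1 → V0 → V1) : Prop where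
  ρ00_bilin : IsBilin K ρ00
  ρ01_bilin : IsBilin K ρ01
  ρ1_bilin : IsBilin K ρ1
  chain : ∀ x m, ρ00 x (par m) = par (ρ01 x m)
  comp0 : ∀ a v, ρ00 (δ a) v = par (ρ1 a v)
  comp1 : ∀ a m, ρ01 (δ a) m = ρ1 a (par m)
  rep00 : ∀ x y v, ρ00 (br0 x y) v = ρ00 x (ρ00 y v) - ρ00 y (ρ00 x v)
  rep01 : ∀ x y m, ρ01 (br0 x y) m = ρ01 x (ρ01 y m) - ρ01 y (ρ01 x m)
  rep1 : ∀ x a v, ρ1 (br1 x a) v = ρ01 x (ρ1 a v) - ρ1 a (ρ00 x v)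

/-- A strict representation of a strict pre-Lie 2-algebra `(g0, g1, d, m00, m01, m10)` on the
two-term complex `par : V1 → V0`. -/
structure IsStrictRepPreLie2 (d : g1 → g0) (m00 : g0 → g0 → g0) (m01 : g0 → g1 → g1)
    (m10 : g1 → g0 → g1) (par : V1 → V0)
    (ρ00 : g0 → V0 → V0) (ρ01 : g0 → V1 → V1) (ρ1 : g1 → V0 → V1)
    (μ00 : g0 → V0 → V0) (μ01 : g0 → V1 → V1) (μ1 : g1 → V0 → V1) : Prop where
  toRepLie : IsStrictRepLie2 K d (fun x y => m00 x y - m00 y x)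
    (fun x a => m01 x a - m10 a x) par ρ00 ρ01 ρ1
  μ00_bilin : IsBilin K μ00
  μ01_bilin : IsBilin K μ01
  μ1_bilin : IsBilin K μ1
  μchain : ∀ x m, μ00 x (par m) = par (μ01 x m)
  μcomp0 : ∀ a v, μ00 (d a) v = par (μ1 a v)
  μcomp1 : ∀ a m, μ01 (d a) m = μ1 a (par m)
  eqA0 : ∀ x y v, μ00 (m00 x y) v + μ00 y (ρ00 x v) - ρ00 x (μ00 y v) - μ00 y (μ00 x v) = 0
  eqA1 : ∀ x y m, μ01 (m00 x y) m + μ01 y (ρ01 x m) - ρ01 x (μ01 y m) - μ01 y (μ01 x m) = 0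
  eqB : ∀ x a v, μ1 (m01 x a) v - ρ01 x (μ1 a v) + μ1 a (ρ00 x v) - μ1 a (μ00 x v) = 0
  eqC : ∀ a x v, μ1 (m10 a x) v - ρ1 a (μ00 x v) + μ01 x (ρ1 a v) - μ01 x (μ1 a v) = 0

/-- An `O`-operator on a strict Lie 2-algebra associated to a strict representation. -/
structure IsOOperator (δ : g1 → g0) (br0 : g0 → g0 → g0) (br1 : g0 → g1 → g1)
    (par : V1 → V0) (ρ00 : g0 → V0 → V0) (ρ01 : g0 → V1 → V1) (ρ1 : g1 → V0 → V1)
    (T0 : V0 → g0) (T1 : V1 → g1) : Prop where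
  T0_lin : IsLinearMap K T0
  T1_lin : IsLinearMap K T1
  chain : ∀ m, T0 (par m) = δ (T1 m)
  eq0 : ∀ u v, T0 (ρ00 (T0 u) v - ρ00 (T0 v) u) = br0 (T0 u) (T0 v)
  eq1 : ∀ m v, T1 (ρ1 (T1 m) v - ρ01 (T0 v) m) = -br1 (T0 v) (T1 m)

end Rep

section Matched

variable {g0 g1 h0 h1 : Type*}
  [AddCommGroup g0] [Module K g0] [AddCommGroup g1] [Module K g1]
  [AddCommGroup h0] [Module K h0] [AddCommGroup h1] [Module K h1]

/-- A matched pair of strict Lie 2-algebras. -/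
structure IsMatchedPairLie2
    (δ : g1 → g0) (br0 : g0 → g0 → g0) (br1 : g0 → g1 → g1)
    (δ' : h1 → h0) (br0' : h0 → h0 → h0) (br1' : h0 → h1 → h1)
    (ν00 : g0 → h0 → h0) (ν01 : g0 → h1 → h1) (ν1 : g1 → h0 → h1)
    (ν00' : h0 → g0 → g0) (ν01' : h0 → g1 → g1) (ν1' : h1 → g0 → g1) : Prop where
  lie : IsStrictLie2 K δ br0 br1
  lie' : IsStrictLie2 K δ' br0' br1'
  rep : IsStrictRepLie2 K δ br0 br1 δ' ν00 ν01 ν1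
  rep' : IsStrictRepLie2 K δ' br0' br1' δ ν00' ν01' ν1'
  eqL1 : ∀ x' x y, ν00' x' (br0 x y) =
      br0 x (ν00' x' y) + br0 (ν00' x' x) y + ν00' (ν00 y x') x - ν00' (ν00 x x') y
  eqL2 : ∀ x x' y', ν00 x (br0' x' y') =
      br0' x' (ν00 x y') + br0' (ν00 x x') y' + ν00 (ν00' y' x) x' - ν00 (ν00' x' x) y'
  eqL3 : ∀ h' x y, ν1' h' (br0 x y) =
      br1 x (ν1' h' y) - br1 y (ν1' h' x) + ν1' (ν01 y h') x - ν1' (ν01 x h') y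
  eqL4 : ∀ h x' y', ν1 h (br0' x' y') =
      br1' x' (ν1 h y') - br1' y' (ν1 h x') + ν1 (ν01' y' h) x' - ν1 (ν01' x' h) y'
  eqL5 : ∀ x' x h, ν01' x' (br1 x h) =
      br1 x (ν01' x' h) + br1 (ν00' x' x) h + ν1' (ν1 h x') x - ν01' (ν00 x x') h
  eqL6 : ∀ x x' h', ν01 x (br1' x' h') =
      br1' x' (ν01 x h') + br1' (ν00 x x') h' + ν1 (ν1' h' x) x' - ν01 (ν00' x' x) h'

/-- A matched pair of strict pre-Lie 2-algebras. -/
structure IsMatchedPairPreLie2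
    (d : g1 → g0) (m00 : g0 → g0 → g0) (m01 : g0 → g1 → g1) (m10 : g1 → g0 → g1)
    (d' : h1 → h0) (n00 : h0 → h0 → h0) (n01 : h0 → h1 → h1) (n10 : h1 → h0 → h1)
    (ρ00 : g0 → h0 → h0) (ρ01 : g0 → h1 → h1) (ρ1 : g1 → h0 → h1)
    (μ00 : g0 → h0 → h0) (μ01 : g0 → h1 → h1) (μ1 : g1 → h0 → h1)
    (ρ00' : h0 → g0 → g0) (ρ01' : h0 → g1 → g1) (ρ1' : h1 → g0 → g1)
    (μ00' : h0 → g0 → g0) (μ01' : h0 → g1 → g1) (μ1' : h1 → g0 → g1) : Prop where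
  alg : IsStrictPreLie2 K d m00 m01 m10
  alg' : IsStrictPreLie2 K d' n00 n01 n10
  rep : IsStrictRepPreLie2 K d m00 m01 m10 d' ρ00 ρ01 ρ1 μ00 μ01 μ1
  rep' : IsStrictRepPreLie2 K d' n00 n01 n10 d ρ00' ρ01' ρ1' μ00' μ01' μ1'
  eqM1 : ∀ a' x y, μ1' a' (m00 x y - m00 y x) =
      m01 x (μ1' a' y) - m01 y (μ1' a' x) + μ1' (ρ01 y a') x - μ1' (ρ01 x a') y
  eqM2 : ∀ a x' y', μ1 a (n00 x' y' - n00 y' x') =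
      n01 x' (μ1 a y') - n01 y' (μ1 a x') + μ1 (ρ01' y' a) x' - μ1 (ρ01' x' a) y'
  eqM3 : ∀ z' x y, μ00' z' (m00 x y - m00 y x) =
      m00 x (μ00' z' y) - m00 y (μ00' z' x) + μ00' (ρ00 y z') x - μ00' (ρ00 x z') y
  eqM4 : ∀ z x' y', μ00 z (n00 x' y' - n00 y' x') =
      n00 x' (μ00 z y') - n00 y' (μ00 z x') + μ00 (ρ00' y' z) x' - μ00 (ρ00' x' z) y'
  eqM5 : ∀ y' x a, μ01' y' (m01 x a - m10 a x) =
      m01 x (μ01' y' a) - m10 a (μ00' y' x) + μ1' (ρ1 a y') x - μ01' (ρ00 x y') a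
  eqM6 : ∀ y x' a', μ01 y (n01 x' a' - n10 a' x') =
      n01 x' (μ01 y a') - n10 a' (μ00 y x') + μ1 (ρ1' a' y) x' - μ01 (ρ00' x' y) a'
  eqM7 : ∀ x y' a', ρ01 x (n01 y' a') =
      n01 (ρ00 x y' - μ00 x y') a' + ρ01 (μ00' y' x - ρ00' y' x) a'
        + n01 y' (ρ01 x a') + μ1 (μ1' a' x) y'
  eqM8 : ∀ x' y a, ρ01' x' (m01 y a) =
      m01 (ρ00' x' y - μ00' x' y) a + ρ01' (μ00 y x' - ρ00 y x') a
        + m01 y (ρ01' x' a) + μ1' (μ1 a x') y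
  eqM9 : ∀ x a' y', ρ01 x (n10 a' y') =
      n10 (ρ01 x a' - μ01 x a') y' + ρ1 (μ1' a' x - ρ1' a' x) y'
        + n10 a' (ρ00 x y') + μ01 (μ00' y' x) a'
  eqM10 : ∀ x' a y, ρ01' x' (m10 a y) =
      m10 (ρ01' x' a - μ01' x' a) y + ρ1' (μ1 a x' - ρ1 a x') y
        + m10 a (ρ00' x' y) + μ01' (μ00 y x') a
  eqM11 : ∀ a x' y', ρ1 a (n00 x' y') =
      n10 (ρ1 a x' - μ1 a x') y' + ρ1 (μ01' x' a - ρ01' x' a) y'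
        + n01 x' (ρ1 a y') + μ1 (μ01' y' a) x'
  eqM12 : ∀ a' x y, ρ1' a' (m00 x y) =
      m10 (ρ1' a' x - μ1' a' x) y + ρ1' (μ01 x a' - ρ01 x a') y
        + m01 x (ρ1' a' y) + μ1' (μ01 y a') x
  eqM13 : ∀ x y' z', ρ00 x (n00 y' z') =
      n00 (ρ00 x y' - μ00 x y') z' + ρ00 (μ00' y' x - ρ00' y' x) z'
        + n00 y' (ρ00 x z') + μ00 (μ00' z' x) y'
  eqM14 : ∀ x' y z, ρ00' x' (m00 y z) =
      m00 (ρ00' x' y - μ00' x' y) z + ρ00' (μ00 y x' - ρ00 y x') z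
        + m00 y (ρ00' x' z) + μ00' (μ00 z x') y

end Matched

end PreLie2

open PreLie2 Module

/-- the semidirect product of a strict pre-Lie 2-algebra with a strict
representation is a strict pre-Lie 2-algebra. -/
theorem semidirect_product_strict_preLie2
    {K : Type*} [Field K] [CharZero K]
    {A0 A1 V0 V1 : Type*} [AddCommGroup A0] [Module K A0] [FiniteDimensional K A0]
    [AddCommGroup A1] [Module K A1] [FiniteDimensional K A1]
    [AddCommGroup V0] [Module K V0] [FiniteDimensional K V0]
    [AddCommGroup V1] [Module K V1] [FiniteDimensional K V1]
    (d : A1 →ₗ[K] A0) (m00 : A0 →ₗ[K] A0 →ₗ[K] A0) (m01 : A0 →ₗ[K] A1 →ₗ[K] A1)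
    (m10 : A1 →ₗ[K] A0 →ₗ[K] A1)
    (hA : IsStrictPreLie2 K (⇑d) (fun x y => m00 x y) (fun x a => m01 x a) (fun a x => m10 a x))
    (par : V1 →ₗ[K] V0)
    (ρ00 : A0 →ₗ[K] V0 →ₗ[K] V0) (ρ01 : A0 →ₗ[K] V1 →ₗ[K] V1) (ρ1 : A1 →ₗ[K] V0 →ₗ[K] V1)
    (μ00 : A0 →ₗ[K] V0 →ₗ[K] V0) (μ01 : A0 →ₗ[K] V1 →ₗ[K] V1) (μ1 : A1 →ₗ[K] V0 →ₗ[K] V1)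
    (hrep : IsStrictRepPreLie2 K (⇑d) (fun x y => m00 x y) (fun x a => m01 x a)
      (fun a x => m10 a x) (⇑par)
      (fun x v => ρ00 x v) (fun x m => ρ01 x m) (fun a v => ρ1 a v)
      (fun x v => μ00 x v) (fun x m => μ01 x m) (fun a v => μ1 a v)) :
    IsStrictPreLie2 K
      (fun p : A1 × V1 => ((d p.1, par p.2) : A0 × V0))
      (fun p q : A0 × V0 => ((m00 p.1 q.1, ρ00 p.1 q.2 + μ00 q.1 p.2) : A0 × V0))
      (fun (p : A0 × V0) (q : A1 × V1) => ((m01 p.1 q.1, ρ01 p.1 q.2 + μ1 q.1 p.2) : A1 × V1))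
      (fun (p : A1 × V1) (q : A0 × V0) => ((m10 p.1 q.1, ρ1 p.1 q.2 + μ01 q.1 p.2) : A1 × V1)) := by
  obtain ⟨repLie, μ00b, μ01b, μ1b, μchain, μcomp0, μcomp1, eqA0, eqA1, eqB, eqC⟩ := hrep
  obtain ⟨ρ00b, ρ01b, ρ1b, chain, comp0, comp1, rep00, rep01, rep1⟩ := repLie
  constructor
  case d_lin =>
    exact ⟨fun p q => by simp [Prod.ext_iff], fun c p => by simp [Prod.ext_iff]⟩
  case m00_bilin =>
    constructor
    · intro p
      exact ⟨fun q r => by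
          refine Prod.ext ?_ ?_ <;>
            (simp only [Prod.fst_add, Prod.snd_add, map_add, LinearMap.add_apply]; try abel),
        fun c q => by
          refine Prod.ext ?_ ?_ <;>
            (simp only [Prod.smul_fst, Prod.smul_snd, map_smul, LinearMap.smul_apply,
              smul_add]; try abel)⟩
    · intro q
      exact ⟨fun p r => by
          refine Prod.ext ?_ ?_ <;>
            (simp only [Prod.fst_add, Prod.snd_add, map_add, LinearMap.add_apply]; try abel),
        fun c p => by
          refine Prod.ext ?_ ?_ <;>
            (simp only [Prod.smul_fst, Prod.smul_snd, map_smul, LinearMap.smul_apply,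
              smul_add]; try abel)⟩
  case m01_bilin =>
    constructor
    · intro p
      exact ⟨fun q r => by
          refine Prod.ext ?_ ?_ <;>
            (simp only [Prod.fst_add, Prod.snd_add, map_add, LinearMap.add_apply]; try abel),
        fun c q => by
          refine Prod.ext ?_ ?_ <;>
            (simp only [Prod.smul_fst, Prod.smul_snd, map_smul, LinearMap.smul_apply,
              smul_add]; try abel)⟩
    · intro q
      exact ⟨fun p r => by
          refine Prod.ext ?_ ?_ <;>
            (simp only [Prod.fst_add, Prod.snd_add, map_add, LinearMap.add_apply]; try abel),
        fun c p => by
          refine Prod.ext ?_ ?_ <;>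
            (simp only [Prod.smul_fst, Prod.smul_snd, map_smul, LinearMap.smul_apply,
              smul_add]; try abel)⟩
  case m10_bilin =>
    constructor
    · intro p
      exact ⟨fun q r => by
          refine Prod.ext ?_ ?_ <;>
            (simp only [Prod.fst_add, Prod.snd_add, map_add, LinearMap.add_apply]; try abel),
        fun c q => by
          refine Prod.ext ?_ ?_ <;>
            (simp only [Prod.smul_fst, Prod.smul_snd, map_smul, LinearMap.smul_apply,
              smul_add]; try abel)⟩
    · intro q
      exact ⟨fun p r => by
          refine Prod.ext ?_ ?_ <;>
            (simp only [Prod.fst_add, Prod.snd_add, map_add, LinearMap.add_apply]; try abel),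
        fun c p => by
          refine Prod.ext ?_ ?_ <;>
            (simp only [Prod.smul_fst, Prod.smul_snd, map_smul, LinearMap.smul_apply,
              smul_add]; try abel)⟩
  case d_m01 =>
    rintro ⟨x, u⟩ ⟨a, mm⟩
    refine Prod.ext (hA.d_m01 x a) ?_
    simp only [map_add]
    rw [← chain x mm, ← μcomp0 a u]
  case d_m10 =>
    rintro ⟨a, mm⟩ ⟨x, v⟩
    refine Prod.ext (hA.d_m10 a x) ?_
    simp only [map_add]
    rw [← comp0 a v, ← μchain x mm]
  case d_mix =>
    rintro ⟨a, mm⟩ ⟨b, n⟩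
    refine Prod.ext (hA.d_mix a b) ?_
    simp only []
    rw [comp1 a n, μcomp1 b mm]
  case preLie0 =>
    rintro ⟨x, u⟩ ⟨y, v⟩ ⟨z, w⟩
    refine Prod.ext (hA.preLie0 x y z) ?_
    have h1 := rep00 x y w
    simp only [map_sub, LinearMap.sub_apply] at h1
    have h2 := eqA0 y z u
    have h3 := eqA0 x z v
    simp only [Prod.snd_sub, map_add, Prod.fst_sub]
    linear_combination (norm := abel) - h1 + h2 - h3
  case preLie1 =>
    rintro ⟨x, u⟩ ⟨y, v⟩ ⟨a, mm⟩
    refine Prod.ext (hA.preLie1 x y a) ?_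
    have h1 := rep01 x y mm
    simp only [map_sub, LinearMap.sub_apply] at h1
    have h2 := eqB y a u
    have h3 := eqB x a v
    simp only [Prod.snd_sub, map_add, Prod.fst_sub]
    linear_combination (norm := abel) - h1 + h2 - h3
  case preLie2 =>
    rintro ⟨a, mm⟩ ⟨x, u⟩ ⟨y, v⟩
    refine Prod.ext (hA.preLie2 a x y) ?_
    have h1 := rep1 x a v
    simp only [map_sub, LinearMap.sub_apply] at h1
    have h2 := eqC a y u
    have h3 := eqA1 x y mm
    simp only [Prod.snd_sub, map_add, Prod.fst_sub]
    linear_combination (norm := abel) h1 - h2 + h3
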